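/- Let W = (W₁, …, W_q) be a vector of mutually independent real random variables with E[W_i] = E[W_i³] = 0, E[W_i²] = 1 and E[W_i⁴] < ∞ for each i, let μ ∈ ℝ^d, σ ∈ ℝ^{d×q}, (t, x) ∈ ℝ × ℝ^d, and set ξ_h := μ h + √h σ W. Let g : ℝ × ℝ^d → ℝ be four times continuously differentiable with all partial derivatives of order at most 4 bounded. Define the random finite difference operator D_h g(t, x) := (g(t + h, x + ξ_h) − g(t, x)) / h. Then E[D_h g(t, x)] converges to D₀ g(t, x) := ∂_t g(t, x) + μᵀ ∇_x g(t, x) + ½ Tr(σ σᵀ ∇²_x g(t, x)) as h → 0⁺, with the error bounded by C h for some constant C on a right-neighborhood of 0; i.e., E[D_h g(t, x)] = D₀ g(t, x) + O(h). -/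

import Mathlib

open MeasureTheory ProbabilityTheory

private noncomputable instance instNACG3 {E : Type*} [NormedAddCommGroup E] [NormedSpace ℝ E] :
    NormedAddCommGroup (E →L[ℝ] E →L[ℝ] E →L[ℝ] ℝ) :=
  ContinuousLinearMap.toNormedAddCommGroup (F := E →L[ℝ] E →L[ℝ] ℝ) (σ₁₂ := RingHom.id ℝ)
private noncomputable instance instNS3 {E : Type*} [NormedAddCommGroup E] [NormedSpace ℝ E] :
    NormedSpace ℝ (E →L[ℝ] E →L[ℝ] E →L[ℝ] ℝ) :=
  ContinuousLinearMap.toNormedSpace (F := E →L[ℝ] E →L[ℝ] ℝ) (σ₁₂ := RingHom.id ℝ) (𝕜' := ℝ)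

private lemma mvt_aux {F F' : ℝ → ℝ} {M : ℝ}
    (hF : ∀ θ ∈ Set.Icc (0:ℝ) 1, HasDerivAt F (F' θ) θ)
    (hb : ∀ θ ∈ Set.Icc (0:ℝ) 1, |F' θ| ≤ M) (h0 : F 0 = 0)
    {θ : ℝ} (hθ : θ ∈ Set.Icc (0:ℝ) 1) : |F θ| ≤ M := by
  have h0mem : (0:ℝ) ∈ Set.Icc (0:ℝ) 1 := Set.left_mem_Icc.mpr zero_le_one
  have hM : 0 ≤ M := le_trans (abs_nonneg _) (hb 0 h0mem)
  have := Convex.norm_image_sub_le_of_norm_hasDerivWithin_le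
    (f := F) (f' := F') (s := Set.Icc (0:ℝ) 1) (C := M)
    (fun y hy => (hF y hy).hasDerivWithinAt) (fun y hy => hb y hy)
    (convex_Icc 0 1) h0mem hθ
  rw [h0, sub_zero] at this
  calc |F θ| = ‖F θ‖ := rfl
    _ ≤ M * ‖θ - 0‖ := this
    _ ≤ M * 1 := by
        apply mul_le_mul_of_nonneg_left _ hM
        rw [sub_zero, Real.norm_eq_abs, abs_of_nonneg hθ.1]
        exact hθ.2
    _ = M := mul_one M

private lemma hasDerivAt_line {E : Type*} [NormedAddCommGroup E] [NormedSpace ℝ E]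
    {G : Type*} [NormedAddCommGroup G] [NormedSpace ℝ G]
    (F : E → G) (hF : Differentiable ℝ F) (p v : E) (θ : ℝ) :
    HasDerivAt (fun θ' => F (p + θ' • v)) (fderiv ℝ F (p + θ • v) v) θ := by
  have hline : HasDerivAt (fun θ' : ℝ => p + θ' • v) v θ := by
    simpa using ((hasDerivAt_id θ).smul_const v).const_add p
  exact (hF.differentiableAt.hasFDerivAt.comp_hasDerivAt θ hline)

private lemma taylor3_bound {E : Type*} [NormedAddCommGroup E] [NormedSpace ℝ E]
    (g : E → ℝ) (hg : ContDiff ℝ 4 g) {K : ℝ}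
    (hK : ∀ y, ‖iteratedFDeriv ℝ 4 g y‖ ≤ K) (p v : E) :
    |g (p + v) - g p - fderiv ℝ g p v
      - (1/2) * fderiv ℝ (fderiv ℝ g) p v v
      - (1/6) * fderiv ℝ (fderiv ℝ (fderiv ℝ g)) p v v v| ≤ K * ‖v‖^4 := by
  classical
  set g1 := fderiv ℝ g with hg1def
  set g2 := fderiv ℝ g1 with hg2def
  set g3 := fderiv ℝ g2 with hg3def
  set g4 := fderiv ℝ g3 with hg4def
  have hg1 : ContDiff ℝ 3 g1 := hg.fderiv_right (by norm_num)
  have hg2 : ContDiff ℝ 2 g2 := hg1.fderiv_right (by norm_num)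
  have hg3 : ContDiff ℝ 1 g3 := hg2.fderiv_right (by norm_num)
  set f0 : ℝ → ℝ := fun θ => g (p + θ • v) with hf0
  set f1 : ℝ → ℝ := fun θ => g1 (p + θ • v) v with hf1
  set f2 : ℝ → ℝ := fun θ => g2 (p + θ • v) v v with hf2
  set f3 : ℝ → ℝ := fun θ => g3 (p + θ • v) v v v with hf3
  set f4 : ℝ → ℝ := fun θ => g4 (p + θ • v) v v v v with hf4
  have hd0 : ∀ θ, HasDerivAt f0 (f1 θ) θ := fun θ =>
    hasDerivAt_line g (hg.differentiable (by norm_num)) p v θ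
  have hd1 : ∀ θ, HasDerivAt f1 (f2 θ) θ := by
    intro θ
    have h := (hasDerivAt_line g1 (hg1.differentiable (by norm_num)) p v θ).clm_apply
      (hasDerivAt_const θ v)
    simpa using h
  have hd2 : ∀ θ, HasDerivAt f2 (f3 θ) θ := by
    intro θ
    have h := ((hasDerivAt_line g2 (hg2.differentiable (by norm_num)) p v θ).clm_apply
      (hasDerivAt_const θ v)).clm_apply (hasDerivAt_const θ v)
    simpa using h
  have hd3 : ∀ θ, HasDerivAt f3 (f4 θ) θ := by
    intro θ
    have h0 := hasDerivAt_line g3 (hg3.differentiable (by norm_num)) p v θ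
    have h1 := HasDerivAt.clm_apply (G := E →L[ℝ] E →L[ℝ] ℝ) h0 (hasDerivAt_const θ v)
    have h2 := h1.clm_apply (hasDerivAt_const θ v)
    have h := h2.clm_apply (hasDerivAt_const θ v)
    simpa using h
  have hf4b : ∀ θ : ℝ, |f4 θ| ≤ K * ‖v‖^4 := by
    intro θ
    have key : ∀ y : E, g4 y v v v v = iteratedFDeriv ℝ 4 g y (fun _ => v) := by
      intro y
      rw [iteratedFDeriv_succ_apply_right, iteratedFDeriv_succ_apply_right,
        iteratedFDeriv_succ_apply_right, iteratedFDeriv_one_apply]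
      rfl
    have hle := (iteratedFDeriv ℝ 4 g (p + θ • v)).le_opNorm (fun _ => v)
    simp only [Finset.prod_const, Finset.card_univ, Fintype.card_fin] at hle
    calc |f4 θ| = ‖iteratedFDeriv ℝ 4 g (p + θ • v) (fun _ => v)‖ := by
          rw [show f4 θ = g4 (p + θ • v) v v v v from rfl, key]; rfl
      _ ≤ ‖iteratedFDeriv ℝ 4 g (p + θ • v)‖ * ‖v‖^4 := hle
      _ ≤ K * ‖v‖^4 := by
          apply mul_le_mul_of_nonneg_right (hK _) (by positivity)
  set M := K * ‖v‖^4 with hM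
  -- remainder chain
  set r3 : ℝ → ℝ := fun θ => f3 θ - f3 0 with hr3
  set r2 : ℝ → ℝ := fun θ => f2 θ - f2 0 - θ * f3 0 with hr2
  set r1 : ℝ → ℝ := fun θ => f1 θ - f1 0 - θ * f2 0 - θ^2/2 * f3 0 with hr1
  set r0 : ℝ → ℝ := fun θ => f0 θ - f0 0 - θ * f1 0 - θ^2/2 * f2 0 - θ^3/6 * f3 0 with hr0
  have hb3 : ∀ θ ∈ Set.Icc (0:ℝ) 1, |r3 θ| ≤ M := by
    intro θ hθ
    exact mvt_aux (fun y _ => (hd3 y).sub_const (f3 0))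
      (fun y hy => hf4b y) (by simp [hr3]) hθ
  have hb2 : ∀ θ ∈ Set.Icc (0:ℝ) 1, |r2 θ| ≤ M := by
    intro θ hθ
    refine mvt_aux (F' := r3) (fun y _ => ?_) hb3 (by simp [hr2]) hθ
    have := ((hd2 y).sub_const (f2 0)).sub ((hasDerivAt_id y).const_mul (f3 0))
    -- derivative : f3 y - (f3 0 * 1)
    convert this using 1
    any_goals rfl
    · funext z; simp only [hr2, id_eq, Pi.sub_apply]; ring
    · simp only [hr3, id_eq]; ring
  have hb1 : ∀ θ ∈ Set.Icc (0:ℝ) 1, |r1 θ| ≤ M := by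
    intro θ hθ
    refine mvt_aux (F' := r2) (fun y _ => ?_) hb2 (by simp [hr1]) hθ
    have h2 : HasDerivAt (fun z : ℝ => z^2/2 * f3 0) (y * f3 0) y := by
      have := (hasDerivAt_pow 2 y).div_const 2
      have := this.mul_const (f3 0)
      convert this using 1
      any_goals rfl
      ring
    have := (((hd1 y).sub_const (f1 0)).sub ((hasDerivAt_id y).const_mul (f2 0))).sub h2
    convert this using 1
    any_goals rfl
    · funext z; simp only [hr1, id_eq, Pi.sub_apply]; ring
    · simp only [hr2, id_eq]; ring
  have hb0 : ∀ θ ∈ Set.Icc (0:ℝ) 1, |r0 θ| ≤ M := by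
    intro θ hθ
    refine mvt_aux (F' := r1) (fun y _ => ?_) hb1 (by simp [hr0]) hθ
    have h2 : HasDerivAt (fun z : ℝ => z^2/2 * f2 0) (y * f2 0) y := by
      have := ((hasDerivAt_pow 2 y).div_const 2).mul_const (f2 0)
      convert this using 1
      any_goals rfl
      ring
    have h3 : HasDerivAt (fun z : ℝ => z^3/6 * f3 0) (y^2/2 * f3 0) y := by
      have := ((hasDerivAt_pow 3 y).div_const 6).mul_const (f3 0)
      convert this using 1
      any_goals rfl
      ring
    have := ((((hd0 y).sub_const (f0 0)).sub ((hasDerivAt_id y).const_mul (f1 0))).sub h2).sub h3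
    convert this using 1
    any_goals rfl
    · funext z; simp only [hr0, id_eq, Pi.sub_apply]; ring
    · simp only [hr1, id_eq]; ring
  have h1mem : (1:ℝ) ∈ Set.Icc (0:ℝ) 1 := Set.right_mem_Icc.mpr zero_le_one
  have := hb0 1 h1mem
  have e0 : f0 1 = g (p + v) := by simp [hf0]
  have e00 : f0 0 = g p := by simp [hf0]
  have e1 : f1 0 = g1 p v := by simp [hf1]
  have e2 : f2 0 = g2 p v v := by simp [hf2]
  have e3 : f3 0 = g3 p v v v := by simp [hf3]
  rw [hr0] at this
  simp only [e0, e00, e1, e2, e3, one_pow, one_mul] at this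
  exact this


section moments
variable {Ω : Type*} [MeasureSpace Ω] [IsProbabilityMeasure (volume : Measure Ω)]
  {q : ℕ} {W : Fin q → Ω → ℝ}

private lemma integrable_pow_le_four (i : Fin q) (hWmeas : ∀ i, Measurable (W i))
    (hW4 : ∀ i, Integrable (fun ω => (W i ω) ^ 4)) {k : ℕ} (hk : 1 ≤ k) (hk4 : k ≤ 4) :
    Integrable (fun ω => (W i ω) ^ k) := by
  refine Integrable.mono' ((integrable_const (1:ℝ)).add (hW4 i))
    ((hWmeas i).pow_const k).aestronglyMeasurable (Filter.Eventually.of_forall fun ω => ?_)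
  have h1 : |W i ω ^ k| = |W i ω| ^ k := by rw [abs_pow]
  rcases le_or_gt (|W i ω|) 1 with h | h
  · have : |W i ω| ^ k ≤ 1 := pow_le_one₀ (abs_nonneg _) h
    have h4 : (0:ℝ) ≤ W i ω ^ 4 := by positivity
    simp only [Real.norm_eq_abs, h1, Pi.add_apply]
    linarith
  · have : |W i ω| ^ k ≤ |W i ω| ^ 4 := pow_le_pow_right₀ h.le hk4
    have h4 : |W i ω| ^ 4 = W i ω ^ 4 := by
      rw [← abs_pow, abs_of_nonneg (by positivity)]
    simp only [Real.norm_eq_abs, h1, Pi.add_apply]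
    linarith

private lemma integrable_W (i : Fin q) (hWmeas : ∀ i, Measurable (W i))
    (hW4 : ∀ i, Integrable (fun ω => (W i ω) ^ 4)) : Integrable (W i) := by
  have := integrable_pow_le_four i hWmeas hW4 (k := 1) le_rfl (by norm_num)
  simpa using this

private lemma integrable_W_mul_W (hWmeas : ∀ i, Measurable (W i))
    (hWindep : iIndepFun W volume)
    (hW4 : ∀ i, Integrable (fun ω => (W i ω) ^ 4)) (i j : Fin q) :
    Integrable (fun ω => W i ω * W j ω) := by
  rcases eq_or_ne i j with rfl | hij
  · have := integrable_pow_le_four i hWmeas hW4 (k := 2) (by norm_num) (by norm_num)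
    simpa [pow_two] using this
  · exact (hWindep.indepFun hij).integrable_mul
      (integrable_W i hWmeas hW4) (integrable_W j hWmeas hW4)

private lemma integral_W_mul_W (hWmeas : ∀ i, Measurable (W i))
    (hWindep : iIndepFun W volume)
    (hW1 : ∀ i, ∫ ω, W i ω = 0) (hW2 : ∀ i, ∫ ω, (W i ω) ^ 2 = 1)
    (hW4 : ∀ i, Integrable (fun ω => (W i ω) ^ 4)) (i j : Fin q) :
    ∫ ω, W i ω * W j ω = if i = j then 1 else 0 := by
  rcases eq_or_ne i j with rfl | hij
  · simp only [if_pos rfl]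
    rw [← hW2 i]
    congr 1; funext ω; ring
  · rw [if_neg hij, show (fun ω => W i ω * W j ω) = W i * W j from funext fun ω => rfl,
      (hWindep.indepFun hij).integral_mul_eq_mul_integral
        (integrable_W i hWmeas hW4).aestronglyMeasurable (integrable_W j hWmeas hW4).aestronglyMeasurable, hW1 i]
    ring

private lemma indep_sq (hWmeas : ∀ i, Measurable (W i))
    (hWindep : iIndepFun W volume)
    {i j : Fin q} (hij : i ≠ j) :
    IndepFun (fun ω => W i ω * W i ω) (W j) volume := by
  have := (hWindep.indepFun hij).comp (φ := fun x : ℝ => x * x) (ψ := id)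
    (measurable_id.mul measurable_id) measurable_id
  simpa [Function.comp_def] using this

private lemma integrable_W3 (hWmeas : ∀ i, Measurable (W i))
    (hWindep : iIndepFun W volume)
    (hW4 : ∀ i, Integrable (fun ω => (W i ω) ^ 4)) (i j k : Fin q) :
    Integrable (fun ω => W i ω * W j ω * W k ω) := by
  rcases eq_or_ne i j with rfl | hij
  · rcases eq_or_ne i k with rfl | hik
    · have := integrable_pow_le_four i hWmeas hW4 (k := 3) (by norm_num) (by norm_num)
      have heq : (fun ω => W i ω * W i ω * W i ω) = fun ω => W i ω ^ 3 := by
        funext ω; ring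
      rw [heq]; exact this
    · have h2 : Integrable (fun ω => W i ω * W i ω) := by
        simpa [pow_two] using integrable_pow_le_four i hWmeas hW4 (k := 2)
          (by norm_num) (by norm_num)
      exact (indep_sq hWmeas hWindep hik).integrable_mul h2 (integrable_W k hWmeas hW4)
  · rcases eq_or_ne j k with rfl | hjk
    · have h2 : Integrable (fun ω => W j ω * W j ω) := by
        simpa [pow_two] using integrable_pow_le_four j hWmeas hW4 (k := 2)
          (by norm_num) (by norm_num)
      have := (indep_sq hWmeas hWindep hij.symm).integrable_mul h2
        (integrable_W i hWmeas hW4)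
      have heq : (fun ω => W i ω * W j ω * W j ω) = fun ω => (W j ω * W j ω) * W i ω := by
        funext ω; ring
      rw [heq]; exact this
    · rcases eq_or_ne i k with rfl | hik
      · have h2 : Integrable (fun ω => W i ω * W i ω) := by
          simpa [pow_two] using integrable_pow_le_four i hWmeas hW4 (k := 2)
            (by norm_num) (by norm_num)
        have := (indep_sq hWmeas hWindep hij).integrable_mul h2
          (integrable_W j hWmeas hW4)
        have heq : (fun ω => W i ω * W j ω * W i ω) = fun ω => (W i ω * W i ω) * W j ω := by
          funext ω; ring
        rw [heq]; exact this
      · -- all distinct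
        have hknot : k ∉ ({i, j} : Finset (Fin q)) := by
          simp only [Finset.mem_insert, Finset.mem_singleton]
          push_neg
          exact ⟨fun h => hik (h.symm ▸ rfl), fun h => hjk (h.symm ▸ rfl)⟩
        have hindep := hWindep.indepFun_finsetProd_of_notMem hWmeas hknot
        have hprod : (∏ l ∈ ({i, j} : Finset (Fin q)), W l) = fun ω => W i ω * W j ω := by
          rw [Finset.prod_pair hij]; rfl
        rw [hprod] at hindep
        exact hindep.integrable_mul (integrable_W_mul_W hWmeas hWindep hW4 i j)
          (integrable_W k hWmeas hW4)

private lemma integral_W3 (hWmeas : ∀ i, Measurable (W i))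
    (hWindep : iIndepFun W volume)
    (hW1 : ∀ i, ∫ ω, W i ω = 0) (hW2 : ∀ i, ∫ ω, (W i ω) ^ 2 = 1)
    (hW3 : ∀ i, ∫ ω, (W i ω) ^ 3 = 0)
    (hW4 : ∀ i, Integrable (fun ω => (W i ω) ^ 4)) (i j k : Fin q) :
    ∫ ω, W i ω * W j ω * W k ω = 0 := by
  have hsq : ∀ l : Fin q, Integrable (fun ω => W l ω * W l ω) := fun l => by
    simpa [pow_two] using integrable_pow_le_four l hWmeas hW4 (k := 2)
      (by norm_num) (by norm_num)
  rcases eq_or_ne i j with rfl | hij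
  · rcases eq_or_ne i k with rfl | hik
    · have heq : (fun ω => W i ω * W i ω * W i ω) = fun ω => W i ω ^ 3 := by
        funext ω; ring
      rw [heq, hW3 i]
    · rw [show (fun ω => W i ω * W i ω * W k ω)
          = (fun ω => W i ω * W i ω) * W k from funext fun ω => rfl,
        (indep_sq hWmeas hWindep hik).integral_mul_eq_mul_integral (hsq i).aestronglyMeasurable
        (integrable_W k hWmeas hW4).aestronglyMeasurable, hW1 k, mul_zero]
  · rcases eq_or_ne j k with rfl | hjk
    · have heq : (fun ω => W i ω * W j ω * W j ω) = fun ω => (W j ω * W j ω) * W i ω := by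
        funext ω; ring
      rw [heq, show (fun ω => W j ω * W j ω * W i ω)
          = (fun ω => W j ω * W j ω) * W i from funext fun ω => rfl,
        (indep_sq hWmeas hWindep hij.symm).integral_mul_eq_mul_integral (hsq j).aestronglyMeasurable
        (integrable_W i hWmeas hW4).aestronglyMeasurable, hW1 i, mul_zero]
    · rcases eq_or_ne i k with rfl | hik
      · have heq : (fun ω => W i ω * W j ω * W i ω) = fun ω => (W i ω * W i ω) * W j ω := by
          funext ω; ring
        rw [heq, show (fun ω => W i ω * W i ω * W j ω)
            = (fun ω => W i ω * W i ω) * W j from funext fun ω => rfl,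
          (indep_sq hWmeas hWindep hij).integral_mul_eq_mul_integral (hsq i).aestronglyMeasurable
          (integrable_W j hWmeas hW4).aestronglyMeasurable, hW1 j, mul_zero]
      · have hknot : k ∉ ({i, j} : Finset (Fin q)) := by
          simp only [Finset.mem_insert, Finset.mem_singleton]
          push_neg
          exact ⟨fun h => hik (h.symm ▸ rfl), fun h => hjk (h.symm ▸ rfl)⟩
        have hindep := hWindep.indepFun_finsetProd_of_notMem hWmeas hknot
        have hprod : (∏ l ∈ ({i, j} : Finset (Fin q)), W l) = fun ω => W i ω * W j ω := by
          rw [Finset.prod_pair hij]; rfl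
        rw [hprod] at hindep
        rw [show (fun ω => W i ω * W j ω * W k ω)
            = (fun ω => W i ω * W j ω) * W k from funext fun ω => rfl,
          hindep.integral_mul_eq_mul_integral (integrable_W_mul_W hWmeas hWindep hW4 i j).aestronglyMeasurable
          (integrable_W k hWmeas hW4).aestronglyMeasurable, hW1 k, mul_zero]
end moments


private lemma clm1_sum {E : Type*} [NormedAddCommGroup E] [NormedSpace ℝ E]
    {ι : Type*} [Fintype ι] (S : E →L[ℝ] ℝ) (A : ι → ℝ) (w : ι → E) :
    S (∑ z, A z • w z) = ∑ z, A z * S (w z) := by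
  rw [_root_.map_sum]
  exact Finset.sum_congr rfl fun z _ => by rw [_root_.map_smul, smul_eq_mul]

private lemma clm2_sum {E : Type*} [NormedAddCommGroup E] [NormedSpace ℝ E]
    {ι : Type*} [Fintype ι] (B : E →L[ℝ] E →L[ℝ] ℝ) (A : ι → ℝ) (w : ι → E) (Y : E) :
    B (∑ z, A z • w z) Y = ∑ z, A z * B (w z) Y := by
  have h1 : B (∑ z, A z • w z) = ∑ z, A z • B (w z) := by
    rw [_root_.map_sum]
    exact Finset.sum_congr rfl fun z _ => by rw [_root_.map_smul]
  rw [h1, ContinuousLinearMap.sum_apply]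
  exact Finset.sum_congr rfl fun z _ => by
    rw [ContinuousLinearMap.smul_apply, smul_eq_mul]

private lemma clm3_sum {E : Type*} [NormedAddCommGroup E] [NormedSpace ℝ E]
    {ι : Type*} [Fintype ι] (T : E →L[ℝ] E →L[ℝ] E →L[ℝ] ℝ) (A : ι → ℝ) (w : ι → E)
    (Y Z : E) :
    T (∑ z, A z • w z) Y Z = ∑ z, A z * T (w z) Y Z := by
  have h1 : T (∑ z, A z • w z) = ∑ z, A z • T (w z) := by
    rw [_root_.map_sum]
    exact Finset.sum_congr rfl fun z _ => by rw [_root_.map_smul]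
  rw [h1, ContinuousLinearMap.sum_apply, ContinuousLinearMap.sum_apply]
  exact Finset.sum_congr rfl fun z _ => by
    rw [ContinuousLinearMap.smul_apply, ContinuousLinearMap.smul_apply, smul_eq_mul]

private lemma pow4_add_bound (a b : ℝ) (ha : 0 ≤ a) (hb : 0 ≤ b) :
    (a + b)^4 ≤ 8*(a^4 + b^4) := by
  nlinarith [sq_nonneg (a - b), sq_nonneg (a + b), sq_nonneg (a^2 - b^2),
    mul_nonneg ha hb, sq_nonneg (a*b)]
set_option maxHeartbeats 4000000 in
/-- With `W`, `μ`, `σ`, `(t,x)`, `ξ_h := μ h + √h σ W` and `g` as in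
Statement 1, the expectation of the random finite difference operator
`D_h g(t,x) := (g(t+h, x+ξ_h) − g(t,x))/h` satisfies
`E[D_h g(t,x)] = D₀ g(t,x) + O(h)` as `h → 0⁺`, where
`D₀ g := ∂_t g + μᵀ∇_x g + ½ Tr(σσᵀ ∇²_x g)`; i.e. the error is bounded by `C h` on a
right-neighborhood of `0`. -/
theorem rdo_converges_to_generator
    {Ω : Type*} [MeasureSpace Ω] [IsProbabilityMeasure (volume : Measure Ω)]
    {d q : ℕ}
    (W : Fin q → Ω → ℝ)
    (hWmeas : ∀ i, Measurable (W i))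
    (hWindep : iIndepFun W volume)
    (hW1 : ∀ i, ∫ ω, W i ω = 0)
    (hW2 : ∀ i, ∫ ω, (W i ω) ^ 2 = 1)
    (hW3 : ∀ i, ∫ ω, (W i ω) ^ 3 = 0)
    (hW4 : ∀ i, Integrable (fun ω => (W i ω) ^ 4))
    (μ : Fin d → ℝ) (σ : Matrix (Fin d) (Fin q) ℝ) (t : ℝ) (x : Fin d → ℝ)
    (g : ℝ × (Fin d → ℝ) → ℝ) (hg : ContDiff ℝ 4 g)
    (hgbdd : ∀ n : ℕ, n ≤ 4 → ∃ K : ℝ, ∀ p : ℝ × (Fin d → ℝ), ‖iteratedFDeriv ℝ n g p‖ ≤ K) :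
    ∃ C > (0:ℝ), ∃ h₀ > (0:ℝ), ∀ h : ℝ, 0 < h → h ≤ h₀ →
      |(∫ ω, (g (t + h, x + fun a => μ a * h + Real.sqrt h * ∑ i, σ a i * W i ω)
              - g (t, x)) / h)
        - (fderiv ℝ g (t, x) ((1:ℝ), (0 : Fin d → ℝ))
            + fderiv ℝ g (t, x) ((0:ℝ), μ)
            + (1/2) * ∑ a, ∑ b, (σ * σ.transpose) a b *
                fderiv ℝ (fun p => fderiv ℝ g p ((0:ℝ), Pi.single b 1)) (t, x)
                  ((0:ℝ), Pi.single a 1))|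
        ≤ C * h := by
  classical
  obtain ⟨K4, hK4⟩ := hgbdd 4 le_rfl
  have hK40 : 0 ≤ K4 := le_trans (norm_nonneg _) (hK4 (t, x))
  set p : ℝ × (Fin d → ℝ) := (t, x) with hpdef
  set u : ℝ × (Fin d → ℝ) := (1, μ) with hudef
  set c : Fin q → ℝ × (Fin d → ℝ) := fun i => (0, fun a => σ a i) with hcdef
  set g1 := fderiv ℝ g with hg1def
  set g2 := fderiv ℝ g1 with hg2def
  set g3 := fderiv ℝ g2 with hg3def
  have hg1c : ContDiff ℝ 3 g1 := hg.fderiv_right (by norm_num)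
  have hg2c : ContDiff ℝ 2 g2 := hg1c.fderiv_right (by norm_num)
  have hg3c : ContDiff ℝ 1 g3 := hg2c.fderiv_right (by norm_num)
  -- target identities
  have hT1 : g1 p ((1:ℝ), (0 : Fin d → ℝ)) + g1 p ((0:ℝ), μ) = g1 p u := by
    rw [← map_add, Prod.mk_add_mk, add_zero, zero_add]
  have hfd : ∀ (z w' : ℝ × (Fin d → ℝ)),
      fderiv ℝ (fun p' => g1 p' w') p z = g2 p z w' := by
    intro z w'
    have hdiff : DifferentiableAt ℝ g1 p := (hg1c.differentiable (by norm_num)).differentiableAt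
    rw [fderiv_clm_apply hdiff (differentiableAt_const w')]
    simp [hg2def]
  have hc : ∀ i, c i = ∑ a, σ a i • (((0:ℝ), Pi.single a (1:ℝ)) : ℝ × (Fin d → ℝ)) := by
    intro i
    apply Prod.ext
    · simp [hcdef, Prod.fst_sum]
    · funext b
      simp [hcdef, Prod.snd_sum, Finset.sum_apply, Pi.single_apply]
  have hcc : ∀ i, g2 p (c i) (c i)
      = ∑ a, ∑ b, σ a i * σ b i *
        g2 p ((0:ℝ), Pi.single a (1:ℝ)) ((0:ℝ), Pi.single b (1:ℝ)) := by
    intro i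
    conv_lhs => rw [hc i]
    simp only [_root_.map_sum, _root_.map_smul, ContinuousLinearMap.sum_apply,
      ContinuousLinearMap.smul_apply, smul_eq_mul, Finset.mul_sum]
    rw [Finset.sum_comm]
    refine Finset.sum_congr rfl fun a _ => Finset.sum_congr rfl fun b _ => by ring
  have hswap : ∀ (F : Fin d → Fin d → Fin q → ℝ),
      ∑ a, ∑ b, ∑ i, F a b i = ∑ i, ∑ a, ∑ b, F a b i := by
    intro F
    calc ∑ a, ∑ b, ∑ i, F a b i
        = ∑ a, ∑ i, ∑ b, F a b i := Finset.sum_congr rfl fun a _ => Finset.sum_comm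
      _ = ∑ i, ∑ a, ∑ b, F a b i := Finset.sum_comm
  have hT2 : ∑ a, ∑ b, (σ * σ.transpose) a b *
      fderiv ℝ (fun p' => g1 p' ((0:ℝ), Pi.single b 1)) p ((0:ℝ), Pi.single a 1)
      = ∑ i, g2 p (c i) (c i) := by
    simp only [hfd]
    simp only [Matrix.mul_apply, Matrix.transpose_apply, Finset.sum_mul]
    rw [hswap]
    exact Finset.sum_congr rfl fun i _ => (hcc i).symm
  -- the random vector s
  set s : Ω → ℝ × (Fin d → ℝ) := fun ω => ∑ i, W i ω • c i with hsdef
  have hmeass : Measurable s :=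
    Finset.measurable_sum _ fun i _ => (hWmeas i).smul_const (c i)
  have hsnorm4 : Integrable (fun ω => ‖s ω‖^4) := by
    refine Integrable.mono'
      (g := fun ω => (q:ℝ)^3 * ∑ i, ‖c i‖^4 * (W i ω)^4)
      ((integrable_finset_sum _ fun i _ => (hW4 i).const_mul (‖c i‖^4)).const_mul ((q:ℝ)^3))
      ((hmeass.norm.pow_const 4).aestronglyMeasurable)
      (Filter.Eventually.of_forall fun ω => ?_)
    have h1 : ‖s ω‖ ≤ ∑ i, |W i ω| * ‖c i‖ := by
      refine le_trans (norm_sum_le _ _) (le_of_eq (Finset.sum_congr rfl fun i _ => ?_))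
      rw [norm_smul, Real.norm_eq_abs]
    have h2 : ‖s ω‖^4 ≤ (∑ i, |W i ω| * ‖c i‖)^4 :=
      pow_le_pow_left₀ (norm_nonneg _) h1 4
    have h3 : (∑ i, |W i ω| * ‖c i‖)^4 ≤ (q:ℝ)^3 * ∑ i, (|W i ω| * ‖c i‖)^4 := by
      have := pow_sum_le_card_mul_sum_pow
        (s := (Finset.univ : Finset (Fin q))) (f := fun i => |W i ω| * ‖c i‖)
        (fun i _ => by positivity) 3
      simpa using this
    have h4 : ∀ i : Fin q, (|W i ω| * ‖c i‖)^4 = ‖c i‖^4 * (W i ω)^4 := by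
      intro i
      rw [mul_pow, ← abs_pow, abs_of_nonneg (by positivity : (0:ℝ) ≤ W i ω ^ 4)]
      ring
    rw [Real.norm_eq_abs, abs_of_nonneg (by positivity : (0:ℝ) ≤ ‖s ω‖^4)]
    calc ‖s ω‖^4 ≤ (∑ i, |W i ω| * ‖c i‖)^4 := h2
      _ ≤ (q:ℝ)^3 * ∑ i, (|W i ω| * ‖c i‖)^4 := h3
      _ = (q:ℝ)^3 * ∑ i, ‖c i‖^4 * (W i ω)^4 := by
          rw [Finset.sum_congr rfl fun i _ => h4 i]
  set S := ∫ ω, ‖s ω‖^4 with hSdef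
  have hS0 : 0 ≤ S := integral_nonneg fun ω => by positivity
  set Xb := ∑ i, |g3 p u (c i) (c i) + g3 p (c i) u (c i) + g3 p (c i) (c i) u| with hXbdef
  have hXb0 : 0 ≤ Xb := Finset.sum_nonneg fun i _ => abs_nonneg _
  set C0 := |g2 p u u|/2 + |g3 p u u u|/6 + Xb/6 + 8*K4*(‖u‖^4 + S) with hC0def
  have hC00 : 0 ≤ C0 := by positivity
  refine ⟨C0 + 1, by linarith, 1, one_pos, fun h hh0 hh1 => ?_⟩
  -- fixed h
  have hhnn : (0:ℝ) ≤ h := hh0.le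
  have hne : h ≠ 0 := ne_of_gt hh0
  have hsq : Real.sqrt h * Real.sqrt h = h := Real.mul_self_sqrt hhnn
  have hsqnn : 0 ≤ Real.sqrt h := Real.sqrt_nonneg h
  have hh2 : h^2 ≤ h := by
    calc h^2 = h*h := sq h
      _ ≤ h*1 := mul_le_mul_of_nonneg_left hh1 hhnn
      _ = h := mul_one h
  set a : Option (Fin q) → Ω → ℝ :=
    fun z ω => Option.elim z h (fun i => Real.sqrt h * W i ω) with hadef
  set wv : Option (Fin q) → ℝ × (Fin d → ℝ) := fun z => Option.elim z u c with hwdef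
  set v : Ω → ℝ × (Fin d → ℝ) := fun ω => ∑ z, a z ω • wv z with hvdef
  -- v in terms of s
  have hvalt : ∀ ω, v ω = h • u + Real.sqrt h • s ω := by
    intro ω
    show (∑ z, a z ω • wv z) = _
    rw [Fintype.sum_option]
    simp only [hadef, hwdef, hsdef, Option.elim_none, Option.elim_some]
    rw [Finset.smul_sum]
    congr 1
    exact Finset.sum_congr rfl fun i _ => (smul_smul _ _ _).symm
  -- p + v ω is the argument appearing in the statement
  have hv1 : ∀ ω, (v ω).1 = h := by
    intro ω
    show (∑ z, a z ω • wv z).1 = h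
    rw [Prod.fst_sum, Fintype.sum_option]
    simp [hadef, hwdef, hudef, hcdef]
  have hv2 : ∀ ω, (v ω).2 = fun b => μ b * h + Real.sqrt h * ∑ i, σ b i * W i ω := by
    intro ω
    funext b
    show (∑ z, a z ω • wv z).2 b = _
    rw [Prod.snd_sum, Finset.sum_apply, Fintype.sum_option]
    simp only [hadef, hwdef, hudef, hcdef, Option.elim_none, Option.elim_some,
      Prod.smul_snd, Pi.smul_apply, smul_eq_mul]
    rw [Finset.mul_sum]
    have : ∀ i : Fin q, Real.sqrt h * W i ω * σ b i = Real.sqrt h * (σ b i * W i ω) := by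
      intro i; ring
    rw [Finset.sum_congr rfl fun i _ => this i]
    ring
  have hvp : ∀ ω, p + v ω
      = (t + h, x + fun b => μ b * h + Real.sqrt h * ∑ i, σ b i * W i ω) := by
    intro ω
    apply Prod.ext
    · show p.1 + (v ω).1 = t + h
      rw [hv1 ω, hpdef]
    · show p.2 + (v ω).2 = _
      rw [hv2 ω, hpdef]
  -- integrability and moments of products of a's
  have iW : ∀ i, Integrable (W i) := fun i => integrable_W i hWmeas hW4
  have iWW : ∀ i j, Integrable (fun ω => W i ω * W j ω) :=
    integrable_W_mul_W hWmeas hWindep hW4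
  have iWWW : ∀ i j k, Integrable (fun ω => W i ω * W j ω * W k ω) :=
    integrable_W3 hWmeas hWindep hW4
  have mWW := integral_W_mul_W hWmeas hWindep hW1 hW2 hW4
  have mWWW := integral_W3 hWmeas hWindep hW1 hW2 hW3 hW4
  have ham : ∀ z, Measurable (a z) := by
    rintro (_|i) <;> simp only [hadef, Option.elim_none, Option.elim_some]
    · exact measurable_const
    · exact (hWmeas i).const_mul _
  have ia1 : ∀ z, Integrable (a z) := by
    rintro (_|i) <;> simp only [hadef, Option.elim_none, Option.elim_some]
    · exact integrable_const _
    · exact (iW i).const_mul _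
  have ia2 : ∀ z1 z2, Integrable (fun ω => a z1 ω * a z2 ω) := by
    rintro (_|i) (_|j) <;> simp only [hadef, Option.elim_none, Option.elim_some]
    · exact integrable_const _
    · exact ((iW j).const_mul _).const_mul _
    · exact ((iW i).const_mul _).mul_const _
    · have e : (fun ω => (Real.sqrt h * W i ω) * (Real.sqrt h * W j ω))
          = fun ω => (Real.sqrt h * Real.sqrt h) * (W i ω * W j ω) := funext fun ω => by ring
      rw [e]; exact (iWW i j).const_mul _
  have ia3 : ∀ z1 z2 z3, Integrable (fun ω => a z1 ω * a z2 ω * a z3 ω) := by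
    rintro (_|i) (_|j) (_|k) <;> simp only [hadef, Option.elim_none, Option.elim_some]
    · exact integrable_const _
    · exact ((iW k).const_mul _).const_mul _
    · exact (((iW j).const_mul _).const_mul _).mul_const _
    · have e : (fun ω => h * (Real.sqrt h * W j ω) * (Real.sqrt h * W k ω))
          = fun ω => (h * (Real.sqrt h * Real.sqrt h)) * (W j ω * W k ω) :=
        funext fun ω => by ring
      rw [e]; exact (iWW j k).const_mul _
    · exact (((iW i).const_mul _).mul_const _).mul_const _
    · have e : (fun ω => (Real.sqrt h * W i ω) * h * (Real.sqrt h * W k ω))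
          = fun ω => (Real.sqrt h * Real.sqrt h * h) * (W i ω * W k ω) :=
        funext fun ω => by ring
      rw [e]; exact (iWW i k).const_mul _
    · have e : (fun ω => (Real.sqrt h * W i ω) * (Real.sqrt h * W j ω) * h)
          = fun ω => (Real.sqrt h * Real.sqrt h * h) * (W i ω * W j ω) :=
        funext fun ω => by ring
      rw [e]; exact (iWW i j).const_mul _
    · have e : (fun ω => (Real.sqrt h * W i ω) * (Real.sqrt h * W j ω) * (Real.sqrt h * W k ω))
          = fun ω => (Real.sqrt h * Real.sqrt h * Real.sqrt h) * (W i ω * W j ω * W k ω) :=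
        funext fun ω => by ring
      rw [e]; exact (iWWW i j k).const_mul _
  -- first moments
  have ma1n : ∫ ω, a none ω = h := by
    simp [hadef]
  have ma1s : ∀ i, ∫ ω, a (some i) ω = 0 := by
    intro i
    simp only [hadef, Option.elim_some]
    rw [integral_const_mul, hW1 i, mul_zero]
  -- second moments
  have ma2nn : ∫ ω, a none ω * a none ω = h * h := by simp [hadef]
  have ma2ns : ∀ j, ∫ ω, a none ω * a (some j) ω = 0 := by
    intro j
    simp only [hadef, Option.elim_none, Option.elim_some]
    have e : (fun ω => h * (Real.sqrt h * W j ω)) = fun ω => (h * Real.sqrt h) * W j ω :=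
      funext fun ω => by ring
    rw [e, integral_const_mul, hW1 j, mul_zero]
  have ma2sn : ∀ i, ∫ ω, a (some i) ω * a none ω = 0 := by
    intro i
    simp only [hadef, Option.elim_none, Option.elim_some]
    have e : (fun ω => (Real.sqrt h * W i ω) * h) = fun ω => (h * Real.sqrt h) * W i ω :=
      funext fun ω => by ring
    rw [e, integral_const_mul, hW1 i, mul_zero]
  have ma2ss : ∀ i j, ∫ ω, a (some i) ω * a (some j) ω = if i = j then h else 0 := by
    intro i j
    simp only [hadef, Option.elim_some]
    have e : (fun ω => (Real.sqrt h * W i ω) * (Real.sqrt h * W j ω))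
        = fun ω => (Real.sqrt h * Real.sqrt h) * (W i ω * W j ω) := funext fun ω => by ring
    rw [e, integral_const_mul, mWW i j, hsq]
    simp [mul_ite]
  -- third moments
  have ma3nnn : ∫ ω, a none ω * a none ω * a none ω = h * h * h := by simp [hadef]
  have ma3nns : ∀ k, ∫ ω, a none ω * a none ω * a (some k) ω = 0 := by
    intro k
    simp only [hadef, Option.elim_none, Option.elim_some]
    have e : (fun ω => h * h * (Real.sqrt h * W k ω))
        = fun ω => (h * h * Real.sqrt h) * W k ω := funext fun ω => by ring
    rw [e, integral_const_mul, hW1 k, mul_zero]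
  have ma3nsn : ∀ j, ∫ ω, a none ω * a (some j) ω * a none ω = 0 := by
    intro j
    simp only [hadef, Option.elim_none, Option.elim_some]
    have e : (fun ω => h * (Real.sqrt h * W j ω) * h)
        = fun ω => (h * h * Real.sqrt h) * W j ω := funext fun ω => by ring
    rw [e, integral_const_mul, hW1 j, mul_zero]
  have ma3snn : ∀ i, ∫ ω, a (some i) ω * a none ω * a none ω = 0 := by
    intro i
    simp only [hadef, Option.elim_none, Option.elim_some]
    have e : (fun ω => (Real.sqrt h * W i ω) * h * h)
        = fun ω => (h * h * Real.sqrt h) * W i ω := funext fun ω => by ring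
    rw [e, integral_const_mul, hW1 i, mul_zero]
  have ma3nss : ∀ j k, ∫ ω, a none ω * a (some j) ω * a (some k) ω
      = if j = k then h * h else 0 := by
    intro j k
    simp only [hadef, Option.elim_none, Option.elim_some]
    have e : (fun ω => h * (Real.sqrt h * W j ω) * (Real.sqrt h * W k ω))
        = fun ω => (h * h) * (W j ω * W k ω) := funext fun ω => by
      rw [show h * h = h * (Real.sqrt h * Real.sqrt h) by rw [hsq]]; ring
    rw [e, integral_const_mul, mWW j k]
    simp [mul_ite]
  have ma3sns : ∀ i k, ∫ ω, a (some i) ω * a none ω * a (some k) ω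
      = if i = k then h * h else 0 := by
    intro i k
    simp only [hadef, Option.elim_none, Option.elim_some]
    have e : (fun ω => (Real.sqrt h * W i ω) * h * (Real.sqrt h * W k ω))
        = fun ω => (h * h) * (W i ω * W k ω) := funext fun ω => by
      rw [show h * h = h * (Real.sqrt h * Real.sqrt h) by rw [hsq]]; ring
    rw [e, integral_const_mul, mWW i k]
    simp [mul_ite]
  have ma3ssn : ∀ i j, ∫ ω, a (some i) ω * a (some j) ω * a none ω
      = if i = j then h * h else 0 := by
    intro i j
    simp only [hadef, Option.elim_none, Option.elim_some]
    have e : (fun ω => (Real.sqrt h * W i ω) * (Real.sqrt h * W j ω) * h)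
        = fun ω => (h * h) * (W i ω * W j ω) := funext fun ω => by
      rw [show h * h = h * (Real.sqrt h * Real.sqrt h) by rw [hsq]]; ring
    rw [e, integral_const_mul, mWW i j]
    simp [mul_ite]
  have ma3sss : ∀ i j k, ∫ ω, a (some i) ω * a (some j) ω * a (some k) ω = 0 := by
    intro i j k
    simp only [hadef, Option.elim_some]
    have e : (fun ω => (Real.sqrt h * W i ω) * (Real.sqrt h * W j ω) * (Real.sqrt h * W k ω))
        = fun ω => (Real.sqrt h * Real.sqrt h * Real.sqrt h) * (W i ω * W j ω * W k ω) :=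
      funext fun ω => by ring
    rw [e, integral_const_mul, mWWW i j k, mul_zero]
  -- pointwise multilinear expansions
  have hexp1 : ∀ ω, g1 p (v ω) = ∑ z, a z ω * g1 p (wv z) := by
    intro ω
    show g1 p (∑ z, a z ω • wv z) = _
    rw [_root_.map_sum]
    exact Finset.sum_congr rfl fun z _ => by rw [_root_.map_smul, smul_eq_mul]
  have hexp2 : ∀ ω, g2 p (v ω) (v ω)
      = ∑ z1, ∑ z2, (a z1 ω * a z2 ω) * g2 p (wv z1) (wv z2) := by
    intro ω
    show g2 p (∑ z, a z ω • wv z) (∑ z, a z ω • wv z) = _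
    rw [clm2_sum]
    refine Finset.sum_congr rfl fun z1 _ => ?_
    rw [clm1_sum (g2 p (wv z1)), Finset.mul_sum]
    exact Finset.sum_congr rfl fun z2 _ => by ring
  have hexp3 : ∀ ω, g3 p (v ω) (v ω) (v ω)
      = ∑ z1, ∑ z2, ∑ z3, (a z1 ω * a z2 ω * a z3 ω) * g3 p (wv z1) (wv z2) (wv z3) := by
    intro ω
    show g3 p (∑ z, a z ω • wv z) (∑ z, a z ω • wv z) (∑ z, a z ω • wv z) = _
    rw [clm3_sum]
    refine Finset.sum_congr rfl fun z1 _ => ?_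
    rw [clm2_sum (g3 p (wv z1)), Finset.mul_sum]
    refine Finset.sum_congr rfl fun z2 _ => ?_
    rw [clm1_sum (g3 p (wv z1) (wv z2)), Finset.mul_sum, Finset.mul_sum]
    exact Finset.sum_congr rfl fun z3 _ => by ring
  -- the three integrals
  have key1 : ∫ ω, g1 p (v ω) = h * g1 p u := by
    calc ∫ ω, g1 p (v ω) = ∫ ω, ∑ z, a z ω * g1 p (wv z) := by simp only [hexp1]
      _ = ∑ z, ∫ ω, a z ω * g1 p (wv z) :=
          integral_finset_sum _ fun z _ => (ia1 z).mul_const _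
      _ = ∑ z, (∫ ω, a z ω) * g1 p (wv z) :=
          Finset.sum_congr rfl fun z _ => integral_mul_const _ _
      _ = h * g1 p u := by
          rw [Fintype.sum_option, ma1n]
          simp [ma1s, hwdef]
  have key2 : ∫ ω, g2 p (v ω) (v ω) = h^2 * g2 p u u + h * ∑ i, g2 p (c i) (c i) := by
    calc ∫ ω, g2 p (v ω) (v ω)
        = ∫ ω, ∑ z1, ∑ z2, (a z1 ω * a z2 ω) * g2 p (wv z1) (wv z2) := by simp only [hexp2]
      _ = ∑ z1, ∑ z2, ∫ ω, (a z1 ω * a z2 ω) * g2 p (wv z1) (wv z2) := by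
          rw [integral_finset_sum _ fun z1 _ =>
            integrable_finset_sum _ fun z2 _ => (ia2 z1 z2).mul_const _]
          exact Finset.sum_congr rfl fun z1 _ =>
            integral_finset_sum _ fun z2 _ => (ia2 z1 z2).mul_const _
      _ = ∑ z1, ∑ z2, (∫ ω, a z1 ω * a z2 ω) * g2 p (wv z1) (wv z2) :=
          Finset.sum_congr rfl fun z1 _ => Finset.sum_congr rfl fun z2 _ =>
            integral_mul_const _ _
      _ = h^2 * g2 p u u + h * ∑ i, g2 p (c i) (c i) := by
          simp only [Fintype.sum_option]
          rw [ma2nn]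
          simp only [ma2ns, ma2sn, ma2ss, hwdef, Option.elim_none, Option.elim_some,
            zero_mul, Finset.sum_const_zero, add_zero, zero_add, ite_mul,
            Finset.sum_ite_eq, Finset.mem_univ, if_true]
          rw [Finset.mul_sum, pow_two]
  have key3 : ∫ ω, g3 p (v ω) (v ω) (v ω)
      = h^3 * g3 p u u u
        + h^2 * ∑ i, (g3 p u (c i) (c i) + g3 p (c i) u (c i) + g3 p (c i) (c i) u) := by
    calc ∫ ω, g3 p (v ω) (v ω) (v ω)
        = ∫ ω, ∑ z1, ∑ z2, ∑ z3, (a z1 ω * a z2 ω * a z3 ω) * g3 p (wv z1) (wv z2) (wv z3) := by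
          simp only [hexp3]
      _ = ∑ z1, ∑ z2, ∑ z3, ∫ ω, (a z1 ω * a z2 ω * a z3 ω) * g3 p (wv z1) (wv z2) (wv z3) := by
          rw [integral_finset_sum _ fun z1 _ => integrable_finset_sum _ fun z2 _ =>
            integrable_finset_sum _ fun z3 _ => (ia3 z1 z2 z3).mul_const _]
          refine Finset.sum_congr rfl fun z1 _ => ?_
          rw [integral_finset_sum _ fun z2 _ =>
            integrable_finset_sum _ fun z3 _ => (ia3 z1 z2 z3).mul_const _]
          exact Finset.sum_congr rfl fun z2 _ =>
            integral_finset_sum _ fun z3 _ => (ia3 z1 z2 z3).mul_const _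
      _ = ∑ z1, ∑ z2, ∑ z3, (∫ ω, a z1 ω * a z2 ω * a z3 ω) * g3 p (wv z1) (wv z2) (wv z3) :=
          Finset.sum_congr rfl fun z1 _ => Finset.sum_congr rfl fun z2 _ =>
            Finset.sum_congr rfl fun z3 _ => integral_mul_const _ _
      _ = h^3 * g3 p u u u
          + h^2 * ∑ i, (g3 p u (c i) (c i) + g3 p (c i) u (c i) + g3 p (c i) (c i) u) := by
          simp only [Fintype.sum_option]
          rw [ma3nnn]
          simp only [ma3nns, ma3nsn, ma3snn, ma3nss, ma3sns, ma3ssn, ma3sss,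
            hwdef, Option.elim_none, Option.elim_some,
            zero_mul, Finset.sum_const_zero, add_zero, zero_add, ite_mul,
            Finset.sum_ite_eq, Finset.mem_univ, if_true]
          rw [Finset.mul_sum, add_assoc, ← Finset.sum_add_distrib]
          congr 1
          · ring
          · exact Finset.sum_congr rfl fun i _ => by ring
  
  -- pointwise Taylor remainder
  set L : Ω → ℝ := fun ω => g1 p (v ω) with hLdef
  set Q : Ω → ℝ := fun ω => g2 p (v ω) (v ω) with hQdef
  set Cu : Ω → ℝ := fun ω => g3 p (v ω) (v ω) (v ω) with hCudef
  set R : Ω → ℝ :=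
    fun ω => g (p + v ω) - g p - L ω - (1/2) * Q ω - (1/6) * Cu ω with hRdef
  have htay : ∀ ω, |R ω| ≤ K4 * ‖v ω‖^4 := fun ω =>
    taylor3_bound g hg hK4 p (v ω)
  have hvnorm : ∀ ω, ‖v ω‖^4 ≤ 8*h^2*(‖u‖^4 + ‖s ω‖^4) := by
    intro ω
    have h1 : ‖v ω‖ ≤ h*‖u‖ + Real.sqrt h*‖s ω‖ := by
      rw [hvalt ω]
      refine le_trans (norm_add_le _ _) (le_of_eq ?_)
      rw [norm_smul, norm_smul, Real.norm_eq_abs, Real.norm_eq_abs,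
        abs_of_nonneg hhnn, abs_of_nonneg hsqnn]
    have h2 : ‖v ω‖^4 ≤ (h*‖u‖ + Real.sqrt h*‖s ω‖)^4 :=
      pow_le_pow_left₀ (norm_nonneg _) h1 4
    have h3 : (h*‖u‖ + Real.sqrt h*‖s ω‖)^4
        ≤ 8*((h*‖u‖)^4 + (Real.sqrt h*‖s ω‖)^4) :=
      pow4_add_bound _ _ (mul_nonneg hhnn (norm_nonneg _))
        (mul_nonneg hsqnn (norm_nonneg _))
    have h4 : (h*‖u‖)^4 ≤ h^2*‖u‖^4 := by
      have h44 : h^4 ≤ h^2 := by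
        calc h^4 = h^2 * h^2 := by ring
          _ ≤ h^2 * 1 := mul_le_mul_of_nonneg_left (by
              calc h^2 ≤ h := hh2
                _ ≤ 1 := hh1) (sq_nonneg h)
          _ = h^2 := mul_one _
      calc (h*‖u‖)^4 = h^4*‖u‖^4 := by ring
        _ ≤ h^2*‖u‖^4 := mul_le_mul_of_nonneg_right h44 (by positivity)
    have h5 : (Real.sqrt h*‖s ω‖)^4 = h^2*‖s ω‖^4 := by
      have hs4 : (Real.sqrt h)^4 = h^2 := by
        rw [show (Real.sqrt h)^4 = (Real.sqrt h*Real.sqrt h)^2 by ring, hsq]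
      rw [mul_pow, hs4]
    calc ‖v ω‖^4 ≤ 8*((h*‖u‖)^4 + (Real.sqrt h*‖s ω‖)^4) := le_trans h2 h3
      _ ≤ 8*(h^2*‖u‖^4 + h^2*‖s ω‖^4) := by
          have := add_le_add h4 (le_of_eq h5)
          linarith
      _ = 8*h^2*(‖u‖^4 + ‖s ω‖^4) := by ring
  -- measurability
  have hmeasv : Measurable v :=
    Finset.measurable_sum _ fun z _ => ((ham z).smul_const (wv z))
  have hmR : AEStronglyMeasurable R volume := by
    have hA : Measurable fun ω => g (p + v ω) :=
      (hg.continuous.measurable).comp (measurable_const.add hmeasv)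
    have hLm : Measurable L := ((g1 p).continuous.measurable).comp hmeasv
    have hQm : Measurable Q :=
      (((g2 p).continuous.clm_apply continuous_id).measurable).comp hmeasv
    have hCum : Measurable Cu :=
      ((((g3 p).continuous.clm_apply continuous_id).clm_apply
        continuous_id).measurable).comp hmeasv
    exact ((((hA.sub measurable_const).sub hLm).sub (hQm.const_mul _)).sub
      (hCum.const_mul _)).aestronglyMeasurable
  have hRle : ∀ ω, ‖R ω‖ ≤ (8*K4*h^2) * (‖u‖^4 + ‖s ω‖^4) := by
    intro ω
    rw [Real.norm_eq_abs]
    calc |R ω| ≤ K4 * ‖v ω‖^4 := htay ω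
      _ ≤ K4 * (8*h^2*(‖u‖^4 + ‖s ω‖^4)) :=
          mul_le_mul_of_nonneg_left (hvnorm ω) hK40
      _ = (8*K4*h^2) * (‖u‖^4 + ‖s ω‖^4) := by ring
  have hDint : Integrable (fun ω => (8*K4*h^2) * (‖u‖^4 + ‖s ω‖^4)) :=
    ((integrable_const _).add hsnorm4).const_mul _
  have hintR : Integrable R :=
    Integrable.mono' hDint hmR (Filter.Eventually.of_forall hRle)
  have hintL : Integrable L := by
    have e : L = fun ω => ∑ z, a z ω * g1 p (wv z) := funext hexp1
    rw [e]; exact integrable_finset_sum _ fun z _ => (ia1 z).mul_const _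
  have hintQ : Integrable Q := by
    have e : Q = fun ω => ∑ z1, ∑ z2, (a z1 ω * a z2 ω) * g2 p (wv z1) (wv z2) :=
      funext hexp2
    rw [e]
    exact integrable_finset_sum _ fun z1 _ =>
      integrable_finset_sum _ fun z2 _ => (ia2 z1 z2).mul_const _
  have hintCu : Integrable Cu := by
    have e : Cu = fun ω => ∑ z1, ∑ z2, ∑ z3,
        (a z1 ω * a z2 ω * a z3 ω) * g3 p (wv z1) (wv z2) (wv z3) := funext hexp3
    rw [e]
    exact integrable_finset_sum _ fun z1 _ => integrable_finset_sum _ fun z2 _ =>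
      integrable_finset_sum _ fun z3 _ => (ia3 z1 z2 z3).mul_const _
  have hsplit : ∫ ω, (g (p + v ω) - g p)
      = (∫ ω, L ω) + (1/2) * (∫ ω, Q ω) + (1/6) * (∫ ω, Cu ω) + ∫ ω, R ω := by
    have hfun : (fun ω => g (p + v ω) - g p)
        = fun ω => (L ω + (1/2) * Q ω + (1/6) * Cu ω) + R ω := funext fun ω => by
      simp only [hRdef]; ring
    rw [hfun,
      integral_add (f := fun ω => L ω + (1/2) * Q ω + (1/6) * Cu ω) (g := R)
        ((hintL.add (hintQ.const_mul _)).add (hintCu.const_mul _)) hintR,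
      integral_add (f := fun ω => L ω + (1/2) * Q ω) (g := fun ω => (1/6) * Cu ω)
        (hintL.add (hintQ.const_mul _)) (hintCu.const_mul _),
      integral_add (f := L) (g := fun ω => (1/2) * Q ω) hintL (hintQ.const_mul _),
      integral_const_mul, integral_const_mul]
  have hRbound : |∫ ω, R ω| ≤ 8*K4*h^2*(‖u‖^4 + S) := by
    have habsint : |∫ ω, R ω| ≤ ∫ ω, |R ω| := by
      rw [← Real.norm_eq_abs]
      refine (norm_integral_le_integral_norm _).trans (le_of_eq ?_)
      simp [Real.norm_eq_abs]
    calc |∫ ω, R ω| ≤ ∫ ω, |R ω| := habsint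
      _ ≤ ∫ ω, (8*K4*h^2) * (‖u‖^4 + ‖s ω‖^4) := by
          refine integral_mono hintR.abs hDint fun ω => ?_
          rw [← Real.norm_eq_abs]
          exact hRle ω
      _ = 8*K4*h^2*(‖u‖^4 + S) := by
          rw [integral_const_mul, integral_add (integrable_const _) hsnorm4,
            integral_const, ← hSdef]
          simp [measure_univ]
  -- final computation
  have hIeq : (∫ ω, (g (p + v ω) - g p)) / h
      - (g1 p u + (1/2) * ∑ i, g2 p (c i) (c i))
      = (1/2)*h*(g2 p u u) + (1/6)*h^2*(g3 p u u u)
        + (1/6)*h*(∑ i, (g3 p u (c i) (c i) + g3 p (c i) u (c i) + g3 p (c i) (c i) u))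
        + (∫ ω, R ω)/h := by
    rw [hsplit]
    rw [show (∫ ω, L ω) = ∫ ω, g1 p (v ω) from rfl, key1]
    rw [show (∫ ω, Q ω) = ∫ ω, g2 p (v ω) (v ω) from rfl, key2]
    rw [show (∫ ω, Cu ω) = ∫ ω, g3 p (v ω) (v ω) (v ω) from rfl, key3]
    field_simp
    ring
  -- rewrite the goal
  have h1 : (∫ ω, (g (t + h, x + fun b => μ b * h + Real.sqrt h * ∑ i, σ b i * W i ω)
      - g p) / h) = (∫ ω, (g (p + v ω) - g p)) / h := by
    rw [← integral_div]
    refine integral_congr_ae (Filter.Eventually.of_forall fun ω => ?_)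
    show (g (t + h, x + fun b => μ b * h + Real.sqrt h * ∑ i, σ b i * W i ω) - g p) / h
      = (g (p + v ω) - g p) / h
    rw [hvp ω]
  rw [h1, hT2, hT1, hIeq]
  -- numeric bounds
  have hXble : |∑ i, (g3 p u (c i) (c i) + g3 p (c i) u (c i) + g3 p (c i) (c i) u)| ≤ Xb := by
    calc |∑ i, (g3 p u (c i) (c i) + g3 p (c i) u (c i) + g3 p (c i) (c i) u)|
        ≤ ∑ i, |g3 p u (c i) (c i) + g3 p (c i) u (c i) + g3 p (c i) (c i) u| :=
          Finset.abs_sum_le_sum_abs _ _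
      _ = Xb := hXbdef.symm
  have b1 : |(1/2)*h*(g2 p u u)| = h * (|g2 p u u|/2) := by
    rw [abs_mul, abs_mul, abs_of_nonneg hhnn,
      abs_of_nonneg (by norm_num : (0:ℝ) ≤ (1:ℝ)/2)]
    ring
  have b2 : |(1/6)*h^2*(g3 p u u u)| ≤ h * (|g3 p u u u|/6) := by
    rw [abs_mul, abs_mul, abs_of_nonneg (sq_nonneg h),
      abs_of_nonneg (by norm_num : (0:ℝ) ≤ (1:ℝ)/6)]
    have := mul_le_mul_of_nonneg_right hh2 (abs_nonneg (g3 p u u u))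
    calc 1/6*h^2*|g3 p u u u| = (h^2*|g3 p u u u|)/6 := by ring
      _ ≤ (h*|g3 p u u u|)/6 := by linarith
      _ = h * (|g3 p u u u|/6) := by ring
  have b3 : |(1/6)*h*(∑ i, (g3 p u (c i) (c i) + g3 p (c i) u (c i) + g3 p (c i) (c i) u))|
      ≤ h * (Xb/6) := by
    rw [abs_mul, abs_mul, abs_of_nonneg hhnn,
      abs_of_nonneg (by norm_num : (0:ℝ) ≤ (1:ℝ)/6)]
    have := mul_le_mul_of_nonneg_left hXble hhnn
    calc 1/6*h*|∑ i, (g3 p u (c i) (c i) + g3 p (c i) u (c i) + g3 p (c i) (c i) u)|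
        = (h*|∑ i, (g3 p u (c i) (c i) + g3 p (c i) u (c i) + g3 p (c i) (c i) u)|)/6 := by
          ring
      _ ≤ (h*Xb)/6 := by linarith
      _ = h * (Xb/6) := by ring
  have b4 : |(∫ ω, R ω)/h| ≤ h * (8*K4*(‖u‖^4 + S)) := by
    rw [abs_div, abs_of_pos hh0, div_le_iff₀ hh0]
    calc |∫ ω, R ω| ≤ 8*K4*h^2*(‖u‖^4 + S) := hRbound
      _ = h * (8*K4*(‖u‖^4 + S)) * h := by ring
  have habs :
      |(1/2)*h*(g2 p u u) + (1/6)*h^2*(g3 p u u u)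
        + (1/6)*h*(∑ i, (g3 p u (c i) (c i) + g3 p (c i) u (c i) + g3 p (c i) (c i) u))
        + (∫ ω, R ω)/h|
      ≤ h * (|g2 p u u|/2) + h * (|g3 p u u u|/6) + h * (Xb/6)
        + h * (8*K4*(‖u‖^4 + S)) := by
    have t1 := abs_add_le ((1/2)*h*(g2 p u u) + (1/6)*h^2*(g3 p u u u)
        + (1/6)*h*(∑ i, (g3 p u (c i) (c i) + g3 p (c i) u (c i) + g3 p (c i) (c i) u)))
      ((∫ ω, R ω)/h)
    have t2 := abs_add_le ((1/2)*h*(g2 p u u) + (1/6)*h^2*(g3 p u u u))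
      ((1/6)*h*(∑ i, (g3 p u (c i) (c i) + g3 p (c i) u (c i) + g3 p (c i) (c i) u)))
    have t3 := abs_add_le ((1/2)*h*(g2 p u u)) ((1/6)*h^2*(g3 p u u u))
    linarith
  have hCsum : h * (|g2 p u u|/2) + h * (|g3 p u u u|/6) + h * (Xb/6)
      + h * (8*K4*(‖u‖^4 + S)) = C0 * h := by
    rw [hC0def]; ring
  have hfin : (C0 + 1) * h = C0 * h + h := by ring
  linarith
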